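/- Define B(γ) = Σ_{i=1}^d s_i³/(M + s_i γ)² and C(γ) = Σ_{i=1}^d s_i²/(M + s_i γ)² for γ ≥ 0. Then for every γ ≥ 0, C'(γ)·B(γ) − C(γ)·B'(γ) = M · Σ_{i=1}^d Σ_{j=1}^d s_i² s_j² (s_i − s_j)² / ((M + s_i γ)³ (M + s_j γ)³). -/

import Mathlib

open Finset

/-- `B(γ) = Σᵢ sᵢ³/(M + sᵢγ)²`. -/
noncomputable def Bfun {d : ℕ} (s : Fin d → ℝ) (M γ : ℝ) : ℝ :=
  ∑ i, s i ^ 3 / (M + s i * γ) ^ 2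

/-- `C(γ) = Σᵢ sᵢ²/(M + sᵢγ)²`. -/
noncomputable def Cfun {d : ℕ} (s : Fin d → ℝ) (M γ : ℝ) : ℝ :=
  ∑ i, s i ^ 2 / (M + s i * γ) ^ 2

lemma hderiv_aux {d : ℕ} (s : Fin d → ℝ) (hs : ∀ i, 0 < s i) (M : ℝ) (hM : 0 < M)
    (k : ℕ) (γ : ℝ) (hγ : 0 ≤ γ) :
    HasDerivAt (fun x => ∑ i, s i ^ k / (M + s i * x) ^ 2)
      (∑ i, (-2) * s i ^ (k + 1) / (M + s i * γ) ^ 3) γ := by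
  apply HasDerivAt.fun_sum
  intro i _
  have hpos : 0 < M + s i * γ := add_pos_of_pos_of_nonneg hM (mul_nonneg (hs i).le hγ)
  have h0 : HasDerivAt (fun x : ℝ => M + s i * x) (s i) γ := by
    simpa using ((hasDerivAt_id γ).const_mul (s i)).const_add M
  have h1 : HasDerivAt (fun x : ℝ => (M + s i * x) ^ 2) (2 * (M + s i * γ) * s i) γ := by
    have := h0.fun_pow 2
    simpa [mul_comm, mul_assoc, mul_left_comm] using this
  have h2 := (hasDerivAt_const γ (s i ^ k)).fun_div h1 (by positivity)
  convert h2 using 1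
  · rfl
  have hne : (M + s i * γ) ≠ 0 := ne_of_gt hpos
  field_simp
  ring

theorem stmt8 (d : ℕ) (hd : 0 < d) (s : Fin d → ℝ) (hs : ∀ i, 0 < s i)
    (M : ℝ) (hM : 0 < M) :
    ∀ γ : ℝ, 0 ≤ γ →
      deriv (Cfun s M) γ * Bfun s M γ - Cfun s M γ * deriv (Bfun s M) γ
        = M * ∑ i, ∑ j, s i ^ 2 * s j ^ 2 * (s i - s j) ^ 2 /
            ((M + s i * γ) ^ 3 * (M + s j * γ) ^ 3) := by
  intro γ hγ
  have hC : deriv (Cfun s M) γ = ∑ i, (-2) * s i ^ 3 / (M + s i * γ) ^ 3 := by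
    have := (hderiv_aux s hs M hM 2 γ hγ).deriv
    rw [show Cfun s M = fun x => ∑ i, s i ^ 2 / (M + s i * x) ^ 2 from rfl]
    simpa [Cfun] using this
  have hB : deriv (Bfun s M) γ = ∑ i, (-2) * s i ^ 4 / (M + s i * γ) ^ 3 := by
    have := (hderiv_aux s hs M hM 3 γ hγ).deriv
    rw [show Bfun s M = fun x => ∑ i, s i ^ 3 / (M + s i * x) ^ 2 from rfl]
    simpa [Bfun] using this
  have hpos : ∀ i, 0 < M + s i * γ := fun i =>
    add_pos_of_pos_of_nonneg hM (mul_nonneg (hs i).le hγ)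
  set a : Fin d → ℝ := fun i => M + s i * γ with ha
  set f : Fin d → Fin d → ℝ := fun i j =>
    (-2) * s i ^ 3 / a i ^ 3 * (s j ^ 3 / a j ^ 2)
      - s i ^ 2 / a i ^ 2 * ((-2) * s j ^ 4 / a j ^ 3) with hf
  set g : Fin d → Fin d → ℝ := fun i j =>
    M * (s i ^ 2 * s j ^ 2 * (s i - s j) ^ 2 / (a i ^ 3 * a j ^ 3)) with hg
  have hlhs : deriv (Cfun s M) γ * Bfun s M γ - Cfun s M γ * deriv (Bfun s M) γ
      = ∑ i, ∑ j, f i j := by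
    rw [hC, hB]
    simp only [Bfun, Cfun, Finset.sum_mul_sum, hf, ← Finset.sum_sub_distrib]
    rfl
  have key : ∀ i j, f i j + f j i = g i j + g j i := by
    intro i j
    have hi : a i ≠ 0 := ne_of_gt (hpos i)
    have hj : a j ≠ 0 := ne_of_gt (hpos j)
    simp only [hf, hg, ha]
    field_simp
    ring
  have hsum : ∑ i, ∑ j, f i j = ∑ i, ∑ j, g i j := by
    have h2 : (2 : ℝ) * (∑ i, ∑ j, f i j) = 2 * (∑ i, ∑ j, g i j) := by
      have hfc : ∑ i, ∑ j, f i j = ∑ i, ∑ j, f j i := Finset.sum_comm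
      have hgc : ∑ i, ∑ j, g i j = ∑ i, ∑ j, g j i := Finset.sum_comm
      calc 2 * (∑ i, ∑ j, f i j) = ∑ i, ∑ j, (f i j + f j i) := by
            rw [two_mul]; nth_rewrite 2 [hfc]
            simp only [← Finset.sum_add_distrib]
        _ = ∑ i, ∑ j, (g i j + g j i) := by
            refine Finset.sum_congr rfl fun i _ => Finset.sum_congr rfl fun j _ => key i j
        _ = 2 * (∑ i, ∑ j, g i j) := by
            rw [two_mul]; nth_rewrite 2 [hgc]
            simp only [← Finset.sum_add_distrib]
    linarith
  rw [hlhs, hsum, hg, Finset.mul_sum]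
  simp [Finset.mul_sum]
  rfl
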